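/- Let (λ[t]) be a nonnegative, nonincreasing real sequence with Σ λ[t]² < ∞, and let 0 ≤ q < 1. Then the double sum Σ_{t=1}^{∞} Σ_{r=0}^{t-1} q^{t-r} λ[r] λ[t] is finite. -/

import Mathlib

theorem stmt2 (l : ℕ → ℝ) (q : ℝ)
    (hl0 : ∀ t, 0 ≤ l t) (hmono : ∀ t, l (t + 1) ≤ l t)
    (hsq : Summable (fun t => (l t) ^ 2))
    (hq0 : 0 ≤ q) (hq1 : q < 1) :
    Summable (fun t => ∑ r ∈ Finset.range t, q ^ (t - r) * l r * l t) := by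
  have hanti : Antitone l := antitone_nat_of_succ_le hmono
  have hg : Summable (fun k => ‖(fun k => q ^ k) k‖) := by
    simpa [Real.norm_eq_abs, abs_of_nonneg (pow_nonneg hq0 _)] using
      summable_geometric_of_lt_one hq0 hq1
  have hf : Summable (fun r => ‖(fun r => (l r) ^ 2) r‖) := by
    have h : ∀ r, ‖(l r) ^ 2‖ = (l r) ^ 2 := fun r => by
      rw [Real.norm_eq_abs]; exact abs_of_nonneg (sq_nonneg _)
    simpa [h] using hsq
  have hcauchy : Summable (fun n => ∑ k ∈ Finset.range (n + 1), (l k) ^ 2 * q ^ (n - k)) :=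
    (summable_norm_sum_mul_range_of_summable_norm
      (f := fun r => (l r) ^ 2) (g := fun k => q ^ k) hf hg).of_norm
  refine hcauchy.of_nonneg_of_le ?_ ?_
  · intro t
    exact Finset.sum_nonneg fun r _ =>
      mul_nonneg (mul_nonneg (pow_nonneg hq0 _) (hl0 r)) (hl0 t)
  · intro t
    calc ∑ r ∈ Finset.range t, q ^ (t - r) * l r * l t
        ≤ ∑ r ∈ Finset.range t, (l r) ^ 2 * q ^ (t - r) := by
          apply Finset.sum_le_sum
          intro r hr
          have hrt : l t ≤ l r := hanti (le_of_lt (Finset.mem_range.mp hr))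
          have : q ^ (t - r) * l r * l t ≤ q ^ (t - r) * l r * l r :=
            mul_le_mul_of_nonneg_left hrt (mul_nonneg (pow_nonneg hq0 _) (hl0 r))
          calc q ^ (t - r) * l r * l t ≤ q ^ (t - r) * l r * l r := this
            _ = (l r) ^ 2 * q ^ (t - r) := by ring
      _ ≤ ∑ r ∈ Finset.range (t + 1), (l r) ^ 2 * q ^ (t - r) := by
          apply Finset.sum_le_sum_of_subset_of_nonneg
          · exact Finset.range_subset_range.mpr (Nat.le_succ t)
          · intro r _ _
            exact mul_nonneg (sq_nonneg _) (pow_nonneg hq0 _)
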